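/- Let R be a commutative domain and σ : R → R a ring endomorphism. Then R is a maximal commutative subring of the skew polynomial ring R[x;σ,0] if and only if σ has infinite order, i.e. σ^n ≠ id_R for every positive integer n. -/

import Mathlib

/-- `δ` is a `σ`-derivation of `R`: it is additive and satisfies the twisted Leibniz rule
`δ(ab) = σ(a)δ(b) + δ(a)b`. -/
def IsSigmaDerivation {R : Type*} [Ring R] (σ : R →+* R) (δ : R → R) : Prop :=
  (∀ a b : R, δ (a + b) = δ a + δ b) ∧ ∀ a b : R, δ (a * b) = σ a * δ b + δ a * b

/-- `S`, together with the ring morphism `f : R →+* S` and the element `x : S`, is an Ore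
extension `R[x;σ,δ]`: the powers `1, x, x², …` form a basis of `S` as a left `R`-module
(i.e. every element of `S` is, in a unique way, a finite sum `Σᵢ f(aᵢ) xⁱ`), and the
commutation rule `x·r = σ(r)·x + δ(r)` holds for all `r ∈ R`. -/
structure IsOreExtension {R S : Type*} [Ring R] [Ring S]
    (σ : R →+* R) (δ : R → R) (f : R →+* S) (x : S) : Prop where
  basis : Function.Bijective fun a : ℕ →₀ R => a.sum fun i r => f r * x ^ i
  rel : ∀ r : R, x * f r = f (σ r) * x + f (δ r)

/-- `R` is `σ`-`δ`-simple: the only two-sided ideals `J` of `R` with `σ(J) ⊆ J` and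
`δ(J) ⊆ J` are `{0}` and `R`. -/
def IsSigmaDeltaSimple {R : Type*} [Ring R] (σ : R →+* R) (δ : R → R) : Prop :=
  ∀ J : TwoSidedIdeal R, (∀ a ∈ J, σ a ∈ J) → (∀ a ∈ J, δ a ∈ J) → J = ⊥ ∨ J = ⊤

/-- `R` is `δ`-simple: the only two-sided ideals `J` of `R` with `δ(J) ⊆ J` are `{0}`
and `R`. -/
def IsDeltaSimple {R : Type*} [Ring R] (δ : R → R) : Prop :=
  ∀ J : TwoSidedIdeal R, (∀ a ∈ J, δ a ∈ J) → J = ⊥ ∨ J = ⊤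

/-- For a commutative domain `R`, `R` is a maximal commutative subring of the skew
polynomial ring `R[x;σ,0]` if and only if `σ` has infinite order. -/
theorem stmt_2 {R S : Type*} [CommRing R] [IsDomain R] [Ring S] (σ : R →+* R)
    (f : R →+* S) (x : S)
    (hS : IsOreExtension σ (fun _ => (0 : R)) f x) :
    Subring.centralizer (Set.range f) = f.range ↔
      ∀ n : ℕ, 0 < n → (⇑σ)^[n] ≠ id := by
  have hrel : ∀ r : R, x * f r = f (σ r) * x := by
    intro r; have := hS.rel r; simpa using this
  have hpow : ∀ (i : ℕ) (r : R), x ^ i * f r = f ((⇑σ)^[i] r) * x ^ i := by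
    intro i
    induction i with
    | zero => simp
    | succ n ih =>
        intro r
        rw [pow_succ, mul_assoc, hrel, ← mul_assoc, ih, Function.iterate_succ_apply,
          mul_assoc, ← pow_succ]
  have hfe : ∀ c : R, f c = (Finsupp.single 0 c).sum (fun i r => f r * x ^ i) := by
    intro c
    rw [Finsupp.sum_single_index (by simp)]
    simp
  constructor
  · intro hcent
    intro n hn hid
    have hx : x ^ n ∈ Subring.centralizer (Set.range f) := by
      rw [Subring.mem_centralizer_iff]
      rintro y ⟨r, rfl⟩
      rw [hpow n r, hid]
      simp
    rw [hcent] at hx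
    obtain ⟨c, hc⟩ := hx
    have hxg : x ^ n = (Finsupp.single n (1 : R)).sum (fun i r => f r * x ^ i) := by
      rw [Finsupp.sum_single_index (by simp)]
      simp
    have heq : Finsupp.single n (1 : R) = Finsupp.single 0 c :=
      hS.basis.injective (by rw [← hxg, ← hfe, hc])
    have h1 := DFunLike.congr_fun heq n
    rw [Finsupp.single_eq_same, Finsupp.single_eq_of_ne (by omega)] at h1
    exact one_ne_zero h1
  · intro hinf
    apply le_antisymm
    · intro s hs
      obtain ⟨a, rfl⟩ := hS.basis.surjective s
      simp only at hs ⊢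
      have key : ∀ (r : R) (i : ℕ), r * a i = a i * (⇑σ)^[i] r := by
        intro r i
        set a' : ℕ →₀ R := a.mapRange (fun y => r * y) (mul_zero r) with ha'
        set a'' : ℕ →₀ R := Finsupp.onFinset a.support (fun i => a i * (⇑σ)^[i] r)
          (fun i h => Finsupp.mem_support_iff.2 (fun h0 => h (by simp [h0]))) with ha''
        have h1 : a'.sum (fun i t => f t * x ^ i)
            = f r * a.sum (fun i t => f t * x ^ i) := by
          rw [ha', Finsupp.sum_mapRange_index (by simp)]
          rw [Finsupp.mul_sum]
          exact Finsupp.sum_congr fun i _ => by rw [map_mul, mul_assoc]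
        have h2 : a''.sum (fun i t => f t * x ^ i)
            = a.sum (fun i t => f t * x ^ i) * f r := by
          rw [ha'', Finsupp.sum_of_support_subset _ Finsupp.support_onFinset_subset _
            (by intros; simp)]
          rw [Finsupp.sum_mul, Finsupp.sum]
          refine Finset.sum_congr rfl fun i _ => ?_
          rw [Finsupp.onFinset_apply, map_mul, mul_assoc, ← hpow i r, ← mul_assoc]
        have hcomm : f r * a.sum (fun i t => f t * x ^ i)
            = a.sum (fun i t => f t * x ^ i) * f r := by
          rw [Subring.mem_centralizer_iff] at hs
          exact hs (f r) ⟨r, rfl⟩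
        have heq : a' = a'' := hS.basis.injective (h1.trans (hcomm.trans h2.symm))
        have := DFunLike.congr_fun heq i
        simpa [ha', ha''] using this
      have hzero : ∀ i : ℕ, i ≠ 0 → a i = 0 := by
        intro i hi
        by_contra hne
        have hiter := hinf i (Nat.pos_of_ne_zero hi)
        have hex : ∃ r : R, (⇑σ)^[i] r ≠ r := by
          by_contra h
          push_neg at h
          exact hiter (funext h)
        obtain ⟨r, hr⟩ := hex
        have hk := key r i
        rw [mul_comm r (a i)] at hk
        have h0 : a i * ((⇑σ)^[i] r - r) = 0 := by rw [mul_sub, ← hk, sub_self]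
        rcases mul_eq_zero.1 h0 with h | h
        · exact hne h
        · exact hr (sub_eq_zero.1 h)
      have ha : a = Finsupp.single 0 (a 0) := by
        ext i
        rcases eq_or_ne i 0 with rfl | hi
        · simp
        · rw [hzero i hi, Finsupp.single_eq_of_ne' (Ne.symm hi)]
      rw [ha, ← hfe]
      exact ⟨a 0, rfl⟩
    · rintro s ⟨c, rfl⟩
      rw [Subring.mem_centralizer_iff]
      rintro y ⟨r, rfl⟩
      rw [← map_mul, ← map_mul, mul_comm]
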